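/- arXiv:1311.1868 — 2 statements merged into one kernel-verified Lean document; each statement's English description precedes it below -/
import Mathlib

section
/- Let μ ∈ Λ(n,r) and β ∈ ℕ^n with β ≤ μ componentwise, and set α_i = μ_{i+1} − β_{i+1} for 0 ≤ i ≤ n−1 (indices mod n). Let δ = (α₀, β₁, α₁, β₂, ..., α_{n−1}, β_n) as a composition of r, and let X_i = {μ_{0,i}+1, ..., μ_{0,i}+α_i} where μ_{0,i} = μ₁+⋯+μ_i. Then the map sending w to (w⁻¹X₀, ..., w⁻¹X_{n−1}) is a bijection from the set of minimal length right-coset representatives of 𝔖_δ inside 𝔖_μ onto the set of tuples (Y₀,...,Y_{n−1}) with Y_i ⊆ R_{i+1}^μ and |Y_i| = α_i. -/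
namespace Stmt13Aux

open Finset

/-- The unique monotone map sending `s` onto `t` (when cards agree), identity off `s`. -/
noncomputable def monoMap (s t : Finset ℕ) (x : ℕ) : ℕ :=
  if hx : x ∈ s ∧ s.card = t.card then
    t.orderEmbOfFin hx.2.symm ((s.orderIsoOfFin rfl).symm ⟨x, hx.1⟩)
  else x

variable {s t : Finset ℕ}

theorem monoMap_of_mem (h : s.card = t.card) {x : ℕ} (hx : x ∈ s) :
    monoMap s t x = t.orderEmbOfFin h.symm ((s.orderIsoOfFin rfl).symm ⟨x, hx⟩) := by
  simp [monoMap, hx, h]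

theorem monoMap_mem (h : s.card = t.card) {x : ℕ} (hx : x ∈ s) :
    monoMap s t x ∈ t := by
  rw [monoMap_of_mem h hx]; exact Finset.orderEmbOfFin_mem _ _ _

theorem monoMap_not_mem {x : ℕ} (hx : x ∉ s) : monoMap s t x = x := by
  simp [monoMap, hx]

theorem monoMap_strictMonoOn (h : s.card = t.card) : StrictMonoOn (monoMap s t) ↑s := by
  intro a ha b hb hab
  rw [Finset.mem_coe] at ha hb
  rw [monoMap_of_mem h ha, monoMap_of_mem h hb]
  apply (t.orderEmbOfFin h.symm).strictMono
  apply (s.orderIsoOfFin rfl).symm.strictMono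
  exact hab

/-- Uniqueness: any strictly monotone map from `s` into `t` agrees with `monoMap`. -/
theorem eq_monoMap_of_strictMonoOn (h : s.card = t.card) {f : ℕ → ℕ}
    (hf : StrictMonoOn f ↑s) (hft : ∀ x ∈ s, f x ∈ t) :
    ∀ x ∈ s, f x = monoMap s t x := by
  have he : ∀ i : Fin s.card, s.orderEmbOfFin rfl i ∈ s := fun i =>
    Finset.orderEmbOfFin_mem _ _ _
  have h1 : (fun i : Fin s.card => f (s.orderEmbOfFin rfl i)) = t.orderEmbOfFin h.symm := by
    apply Finset.orderEmbOfFin_unique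
    · exact fun i => hft _ (he i)
    · intro i j hij
      exact hf (he i) (he j) ((s.orderEmbOfFin rfl).strictMono hij)
  have h2 : (fun i : Fin s.card => monoMap s t (s.orderEmbOfFin rfl i))
      = t.orderEmbOfFin h.symm := by
    apply Finset.orderEmbOfFin_unique
    · exact fun i => monoMap_mem h (he i)
    · intro i j hij
      exact monoMap_strictMonoOn h (he i) (he j) ((s.orderEmbOfFin rfl).strictMono hij)
  intro x hx
  have : x ∈ Set.range (s.orderEmbOfFin rfl) := by
    rw [Finset.range_orderEmbOfFin]; exact hx
  rcases this with ⟨i, rfl⟩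
  rw [congrFun h1 i, congrFun h2 i]

theorem monoMap_self {x : ℕ} (hx : x ∈ s) : monoMap s s x = x :=
  (eq_monoMap_of_strictMonoOn rfl (fun _ _ _ _ h => h) (fun _ h => h) x hx).symm

theorem monoMap_inv (h : s.card = t.card) {x : ℕ} (hx : x ∈ s) :
    monoMap t s (monoMap s t x) = x := by
  have key : ∀ y ∈ s, monoMap t s (monoMap s t y) = monoMap s s y := by
    apply eq_monoMap_of_strictMonoOn rfl
    · intro a ha b hb hab
      exact monoMap_strictMonoOn h.symm (monoMap_mem h ha) (monoMap_mem h hb)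
        (monoMap_strictMonoOn h ha hb hab)
    · exact fun y hy => monoMap_mem h.symm (monoMap_mem h hy)
  rw [key x hx, monoMap_self hx]

theorem monoMap_image (h : s.card = t.card) : s.image (monoMap s t) = t := by
  apply Finset.eq_of_subset_of_card_le
  · intro y hy
    rcases Finset.mem_image.1 hy with ⟨x, hx, rfl⟩
    exact monoMap_mem h hx
  · rw [Finset.card_image_of_injOn (monoMap_strictMonoOn h).injOn, h]

end Stmt13Aux

namespace Stmt13Aux

open Finset

theorem pick_eq {n : ℕ} {M : ℕ → ℕ} (hmono : Monotone M) {i x : ℕ}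
    (hin : i < n) (h1 : M i < x) (h2 : x ≤ M (i + 1)) :
    Nat.findGreatest (fun j => M j < x) n = i := by
  rw [Nat.findGreatest_eq_iff]
  refine ⟨hin.le, fun _ => h1, fun j hj _ hPj => ?_⟩
  exact absurd hPj (not_lt.2 (h2.trans (hmono hj)))

theorem exists_block {M : ℕ → ℕ} :
    ∀ {n x : ℕ}, M 0 < x → x ≤ M n → ∃ i, i < n ∧ M i < x ∧ x ≤ M (i + 1) := by
  intro n
  induction n with
  | zero => intro x h1 h2; omega
  | succ n ih =>
    intro x h1 h2
    by_cases hx : x ≤ M n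
    · obtain ⟨i, hi, hh⟩ := ih h1 hx
      exact ⟨i, hi.trans (Nat.lt_succ_self n), hh⟩
    · exact ⟨n, Nat.lt_succ_self n, not_le.1 hx, h2⟩

noncomputable def F (n : ℕ) (M a : ℕ → ℕ) (Y : ℕ → Finset ℕ) (x : ℕ) : ℕ :=
  if Nat.findGreatest (fun j => M j < x) n < n ∧
      M (Nat.findGreatest (fun j => M j < x) n) < x ∧
      x ≤ M (Nat.findGreatest (fun j => M j < x) n + 1) then
    if x ≤ M (Nat.findGreatest (fun j => M j < x) n) + a (Nat.findGreatest (fun j => M j < x) n)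
    then monoMap (Finset.Ioc (M (Nat.findGreatest (fun j => M j < x) n))
        (M (Nat.findGreatest (fun j => M j < x) n) + a (Nat.findGreatest (fun j => M j < x) n)))
        (Y (Nat.findGreatest (fun j => M j < x) n)) x
    else monoMap (Finset.Ioc (M (Nat.findGreatest (fun j => M j < x) n)
          + a (Nat.findGreatest (fun j => M j < x) n))
          (M (Nat.findGreatest (fun j => M j < x) n + 1)))
        (Finset.Ioc (M (Nat.findGreatest (fun j => M j < x) n))
          (M (Nat.findGreatest (fun j => M j < x) n + 1))
          \ Y (Nat.findGreatest (fun j => M j < x) n)) x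
  else x

noncomputable def G (n : ℕ) (M a : ℕ → ℕ) (Y : ℕ → Finset ℕ) (x : ℕ) : ℕ :=
  if Nat.findGreatest (fun j => M j < x) n < n ∧
      M (Nat.findGreatest (fun j => M j < x) n) < x ∧
      x ≤ M (Nat.findGreatest (fun j => M j < x) n + 1) then
    if x ∈ Y (Nat.findGreatest (fun j => M j < x) n)
    then monoMap (Y (Nat.findGreatest (fun j => M j < x) n))
        (Finset.Ioc (M (Nat.findGreatest (fun j => M j < x) n))
        (M (Nat.findGreatest (fun j => M j < x) n) + a (Nat.findGreatest (fun j => M j < x) n))) x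
    else monoMap
        (Finset.Ioc (M (Nat.findGreatest (fun j => M j < x) n))
          (M (Nat.findGreatest (fun j => M j < x) n + 1))
          \ Y (Nat.findGreatest (fun j => M j < x) n))
        (Finset.Ioc (M (Nat.findGreatest (fun j => M j < x) n)
          + a (Nat.findGreatest (fun j => M j < x) n))
          (M (Nat.findGreatest (fun j => M j < x) n + 1))) x
  else x

variable {n : ℕ} {M a : ℕ → ℕ} {Y : ℕ → Finset ℕ}

theorem F_block (hmono : Monotone M) {i x : ℕ} (hin : i < n) (h1 : M i < x)
    (h2 : x ≤ M (i + 1)) :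
    F n M a Y x =
      if x ≤ M i + a i then monoMap (Finset.Ioc (M i) (M i + a i)) (Y i) x
      else monoMap (Finset.Ioc (M i + a i) (M (i + 1)))
        (Finset.Ioc (M i) (M (i + 1)) \ Y i) x := by
  rw [F, pick_eq hmono hin h1 h2, if_pos ⟨hin, h1, h2⟩]

theorem G_block (hmono : Monotone M) {i x : ℕ} (hin : i < n) (h1 : M i < x)
    (h2 : x ≤ M (i + 1)) :
    G n M a Y x =
      if x ∈ Y i then monoMap (Y i) (Finset.Ioc (M i) (M i + a i)) x
      else monoMap (Finset.Ioc (M i) (M (i + 1)) \ Y i)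
        (Finset.Ioc (M i + a i) (M (i + 1))) x := by
  rw [G, pick_eq hmono hin h1 h2, if_pos ⟨hin, h1, h2⟩]

theorem F_id {x : ℕ} (h : ∀ i, i < n → ¬(M i < x ∧ x ≤ M (i + 1))) :
    F n M a Y x = x := by
  rw [F, if_neg]
  rintro ⟨c1, c2, c3⟩
  exact h _ c1 ⟨c2, c3⟩

theorem G_id {x : ℕ} (h : ∀ i, i < n → ¬(M i < x ∧ x ≤ M (i + 1))) :
    G n M a Y x = x := by
  rw [G, if_neg]
  rintro ⟨c1, c2, c3⟩
  exact h _ c1 ⟨c2, c3⟩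

end Stmt13Aux

namespace Stmt13Aux

open Finset

variable {n : ℕ} {M a : ℕ → ℕ} {Y : ℕ → Finset ℕ}

theorem cardX {i : ℕ} (hin : i < n)
    (hY : ∀ i < n, Y i ⊆ Finset.Ioc (M i) (M (i + 1)) ∧ (Y i).card = a i) :
    (Finset.Ioc (M i) (M i + a i)).card = (Y i).card := by
  rw [Nat.card_Ioc, (hY i hin).2]; omega

theorem cardX' {i : ℕ} (hin : i < n)
    (hY : ∀ i < n, Y i ⊆ Finset.Ioc (M i) (M (i + 1)) ∧ (Y i).card = a i)
    (ha : ∀ i < n, M i + a i ≤ M (i + 1)) :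
    (Finset.Ioc (M i + a i) (M (i + 1))).card
      = (Finset.Ioc (M i) (M (i + 1)) \ Y i).card := by
  have h1 := ha i hin
  rw [Nat.card_Ioc, Finset.card_sdiff_of_subset (hY i hin).1, Nat.card_Ioc, (hY i hin).2]
  omega

theorem gf (hmono : Monotone M)
    (hY : ∀ i < n, Y i ⊆ Finset.Ioc (M i) (M (i + 1)) ∧ (Y i).card = a i)
    (ha : ∀ i < n, M i + a i ≤ M (i + 1)) :
    ∀ x, G n M a Y (F n M a Y x) = x := by
  intro x
  by_cases hx : ∃ i, i < n ∧ M i < x ∧ x ≤ M (i + 1)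
  · obtain ⟨i, hin, h1, h2⟩ := hx
    rw [F_block hmono hin h1 h2]
    by_cases hxle : x ≤ M i + a i
    · rw [if_pos hxle]
      have hxX : x ∈ Finset.Ioc (M i) (M i + a i) := Finset.mem_Ioc.2 ⟨h1, hxle⟩
      have hyY : monoMap (Finset.Ioc (M i) (M i + a i)) (Y i) x ∈ Y i :=
        monoMap_mem (cardX hin hY) hxX
      have hyB := Finset.mem_Ioc.1 ((hY i hin).1 hyY)
      rw [G_block hmono hin hyB.1 hyB.2, if_pos hyY]
      exact monoMap_inv (cardX hin hY) hxX
    · rw [if_neg hxle]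
      have hxX' : x ∈ Finset.Ioc (M i + a i) (M (i + 1)) :=
        Finset.mem_Ioc.2 ⟨not_le.1 hxle, h2⟩
      have hyD : monoMap (Finset.Ioc (M i + a i) (M (i + 1)))
          (Finset.Ioc (M i) (M (i + 1)) \ Y i) x ∈ Finset.Ioc (M i) (M (i + 1)) \ Y i :=
        monoMap_mem (cardX' hin hY ha) hxX'
      obtain ⟨hyB, hyN⟩ := Finset.mem_sdiff.1 hyD
      have hyB' := Finset.mem_Ioc.1 hyB
      rw [G_block hmono hin hyB'.1 hyB'.2, if_neg hyN]
      exact monoMap_inv (cardX' hin hY ha) hxX'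
  · push_neg at hx
    rw [F_id (fun i hi hc => (hx i hi hc.1).not_ge hc.2),
      G_id (fun i hi hc => (hx i hi hc.1).not_ge hc.2)]

theorem fg (hmono : Monotone M)
    (hY : ∀ i < n, Y i ⊆ Finset.Ioc (M i) (M (i + 1)) ∧ (Y i).card = a i)
    (ha : ∀ i < n, M i + a i ≤ M (i + 1)) :
    ∀ x, F n M a Y (G n M a Y x) = x := by
  intro x
  by_cases hx : ∃ i, i < n ∧ M i < x ∧ x ≤ M (i + 1)
  · obtain ⟨i, hin, h1, h2⟩ := hx
    rw [G_block hmono hin h1 h2]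
    by_cases hxY : x ∈ Y i
    · rw [if_pos hxY]
      have hyX : monoMap (Y i) (Finset.Ioc (M i) (M i + a i)) x
          ∈ Finset.Ioc (M i) (M i + a i) :=
        monoMap_mem (cardX hin hY).symm hxY
      have hyX' := Finset.mem_Ioc.1 hyX
      rw [F_block hmono hin hyX'.1 (hyX'.2.trans (ha i hin)), if_pos hyX'.2]
      exact monoMap_inv (cardX hin hY).symm hxY
    · rw [if_neg hxY]
      have hxD : x ∈ Finset.Ioc (M i) (M (i + 1)) \ Y i :=
        Finset.mem_sdiff.2 ⟨Finset.mem_Ioc.2 ⟨h1, h2⟩, hxY⟩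
      have hyX : monoMap (Finset.Ioc (M i) (M (i + 1)) \ Y i)
          (Finset.Ioc (M i + a i) (M (i + 1))) x ∈ Finset.Ioc (M i + a i) (M (i + 1)) :=
        monoMap_mem (cardX' hin hY ha).symm hxD
      have hyX' := Finset.mem_Ioc.1 hyX
      have hy1 : M i < monoMap (Finset.Ioc (M i) (M (i + 1)) \ Y i)
          (Finset.Ioc (M i + a i) (M (i + 1))) x := lt_of_le_of_lt (Nat.le_add_right _ _) hyX'.1
      rw [F_block hmono hin hy1 hyX'.2, if_neg (not_le.2 hyX'.1)]
      exact monoMap_inv (cardX' hin hY ha).symm hxD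
  · push_neg at hx
    rw [G_id (fun i hi hc => (hx i hi hc.1).not_ge hc.2),
      F_id (fun i hi hc => (hx i hi hc.1).not_ge hc.2)]

end Stmt13Aux
open Stmt13Aux in
/-- Let `μ ∈ Λ(n,r)` with cumulative sums `M`, `β ≤ μ`
componentwise, and `α_i = μ_i − β_i` (0-indexed). With `δ` the composition
`(α₀, β₁, α₁, β₂, …, α_{n−1}, β_n)` refining `μ`, and
`X_i = {M_i+1, …, M_i+α_i}` the initial segment of the block
`R_{i+1}^μ = {M_i+1, …, M_{i+1}}`, the map `w ↦ (w⁻¹X₀, …, w⁻¹X_{n−1})` is a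
bijection from the set of minimal-length right coset representatives of
`𝔖_δ` inside `𝔖_μ` (i.e. `w ∈ 𝔖_μ` with `w⁻¹` increasing on each δ-block)
onto the set of tuples `(Y₀,…,Y_{n−1})` with `Y_i ⊆ R_{i+1}^μ` and
`|Y_i| = α_i`. Permutations are realized in `Equiv.Perm ℕ`, fixing `0` and
everything above `r`. -/
theorem stmt13 (n r : ℕ) (hn : 1 ≤ n) (hr : 1 ≤ r)
    (μ β : ℕ → ℕ) (hβ : ∀ i < n, β i ≤ μ i)
    (hsum : ∑ i ∈ Finset.range n, μ i = r)
    (M : ℕ → ℕ) (hM : ∀ i, M i = ∑ j ∈ Finset.range i, μ j) :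
    Set.BijOn
      (fun (w : Equiv.Perm ℕ) (i : ℕ) =>
        if i < n then (Finset.Ioc (M i) (M i + (μ i - β i))).image ⇑w⁻¹ else ∅)
      {w : Equiv.Perm ℕ |
        (∀ x : ℕ, x = 0 ∨ r < x → w x = x) ∧
        (∀ i < n, ⇑w '' ↑(Finset.Ioc (M i) (M (i + 1)))
            = ↑(Finset.Ioc (M i) (M (i + 1)))) ∧
        (∀ i < n, StrictMonoOn (⇑w⁻¹)
            ↑(Finset.Ioc (M i) (M i + (μ i - β i)))) ∧
        (∀ i < n, StrictMonoOn (⇑w⁻¹)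
            ↑(Finset.Ioc (M i + (μ i - β i)) (M (i + 1))))}
      {Y : ℕ → Finset ℕ |
        (∀ i < n, Y i ⊆ Finset.Ioc (M i) (M (i + 1)) ∧ (Y i).card = μ i - β i) ∧
        ∀ i, n ≤ i → Y i = ∅} := by
  have hM0 : M 0 = 0 := by rw [hM]; simp
  have hMn : M n = r := by rw [hM]; exact hsum
  have hstep : ∀ i, M (i + 1) = M i + μ i := by
    intro i; rw [hM, hM, Finset.sum_range_succ]
  have hmono : Monotone M := monotone_nat_of_le_succ fun i => by rw [hstep]; omega
  have ha : ∀ i, M i + (μ i - β i) ≤ M (i + 1) := fun i => by rw [hstep]; omega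
  -- if w⁻¹ fixes block i setwise:
  have hinvmem : ∀ (w : Equiv.Perm ℕ) i, i < n →
      (⇑w '' ↑(Finset.Ioc (M i) (M (i + 1))) = ↑(Finset.Ioc (M i) (M (i + 1)))) →
      ∀ x ∈ Finset.Ioc (M i) (M (i + 1)), w⁻¹ x ∈ Finset.Ioc (M i) (M (i + 1)) := by
    intro w i hi hw x hx
    have : x ∈ ⇑w '' ↑(Finset.Ioc (M i) (M (i + 1))) := by rw [hw]; exact Finset.mem_coe.2 hx
    obtain ⟨z, hz, hzx⟩ := this
    have : w⁻¹ x = z := by rw [← hzx]; exact Equiv.symm_apply_apply w z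
    rw [this]; exact hz
  refine ⟨?_, ?_, ?_⟩
  · -- MapsTo
    rintro w ⟨hw1, hw2, hw3, hw4⟩
    refine ⟨fun i hi => ?_, fun i hi => by simp [Nat.not_lt.2 hi]⟩
    simp only [if_pos hi]
    constructor
    · intro y hy
      obtain ⟨x, hx, rfl⟩ := Finset.mem_image.1 hy
      have hxB : x ∈ Finset.Ioc (M i) (M (i + 1)) := by
        rw [Finset.mem_Ioc] at hx ⊢
        exact ⟨hx.1, hx.2.trans (ha i)⟩
      exact hinvmem w i hi (hw2 i hi) x hxB
    · rw [Finset.card_image_of_injective _ (Equiv.injective _), Nat.card_Ioc]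
      omega
  · -- InjOn
    rintro w ⟨hw1, hw2, hw3, hw4⟩ w' ⟨hw1', hw2', hw3', hw4'⟩ heq
    have heq' : ∀ i < n, (Finset.Ioc (M i) (M i + (μ i - β i))).image ⇑w⁻¹
        = (Finset.Ioc (M i) (M i + (μ i - β i))).image ⇑w'⁻¹ := by
      intro i hi
      have := congrFun heq i
      simpa [if_pos hi] using this
    -- w⁻¹ = w'⁻¹ on each block piece, via uniqueness of monotone maps
    have key : ∀ x, w⁻¹ x = w'⁻¹ x := by
      intro x
      rcases eq_or_ne x 0 with rfl | hx0
      · have e1 : w⁻¹ 0 = 0 := by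
          conv_lhs => rw [← hw1 0 (Or.inl rfl)]
          exact Equiv.symm_apply_apply w 0
        have e2 : w'⁻¹ 0 = 0 := by
          conv_lhs => rw [← hw1' 0 (Or.inl rfl)]
          exact Equiv.symm_apply_apply w' 0
        rw [e1, e2]
      rcases lt_or_ge r x with hxr | hxr
      · have e1 : w⁻¹ x = x := by
          conv_lhs => rw [← hw1 x (Or.inr hxr)]
          exact Equiv.symm_apply_apply w x
        have e2 : w'⁻¹ x = x := by
          conv_lhs => rw [← hw1' x (Or.inr hxr)]
          exact Equiv.symm_apply_apply w' x
        rw [e1, e2]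
      -- x in some block
      obtain ⟨i, hi, h1, h2⟩ := exists_block (M := M) (by omega) (hMn ▸ hxr)
      set Xi := Finset.Ioc (M i) (M i + (μ i - β i)) with hXi
      set Xi' := Finset.Ioc (M i + (μ i - β i)) (M (i + 1)) with hXi'
      set Yi := Xi.image ⇑w⁻¹ with hYi
      have hYcard : Xi.card = Yi.card :=
        (Finset.card_image_of_injective _ (Equiv.injective _)).symm
      have hYB : Yi ⊆ Finset.Ioc (M i) (M (i + 1)) := by
        intro y hy
        obtain ⟨z, hz, rfl⟩ := Finset.mem_image.1 hy
        have hzB : z ∈ Finset.Ioc (M i) (M (i + 1)) := by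
          rw [Finset.mem_Ioc] at hz ⊢
          exact ⟨hz.1, hz.2.trans (ha i)⟩
        exact hinvmem w i hi (hw2 i hi) z hzB
      by_cases hxle : x ≤ M i + (μ i - β i)
      · -- x ∈ Xi
        have hxX : x ∈ Xi := Finset.mem_Ioc.2 ⟨h1, hxle⟩
        have e1 := eq_monoMap_of_strictMonoOn hYcard (hw3 i hi)
          (fun z hz => Finset.mem_image_of_mem _ hz) x hxX
        have e2 := eq_monoMap_of_strictMonoOn
          (hYcard.trans (congrArg Finset.card (heq' i hi) ▸ rfl)) (hw3' i hi)
          (fun z hz => (heq' i hi) ▸ Finset.mem_image_of_mem (⇑w'⁻¹) hz) x hxX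
        rw [e1, e2]
      · -- x ∈ Xi'
        have hxX' : x ∈ Xi' := Finset.mem_Ioc.2 ⟨not_le.1 hxle, h2⟩
        have hc : Xi'.card = (Finset.Ioc (M i) (M (i + 1)) \ Yi).card := by
          rw [Finset.card_sdiff_of_subset hYB, ← hYcard, hXi, hXi', Nat.card_Ioc, Nat.card_Ioc,
            Nat.card_Ioc]
          have := ha i
          omega
        have hmemD : ∀ (v : Equiv.Perm ℕ),
            (⇑v '' ↑(Finset.Ioc (M i) (M (i + 1))) = ↑(Finset.Ioc (M i) (M (i + 1)))) →
            (Xi.image ⇑v⁻¹ = Yi) →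
            ∀ z ∈ Xi', v⁻¹ z ∈ Finset.Ioc (M i) (M (i + 1)) \ Yi := by
          intro v hv hvY z hz
          rw [Finset.mem_sdiff]
          have hzB : z ∈ Finset.Ioc (M i) (M (i + 1)) := by
            rw [Finset.mem_Ioc] at hz ⊢
            refine ⟨lt_of_le_of_lt (Nat.le_add_right _ _) hz.1, hz.2⟩
          refine ⟨hinvmem v i hi hv z hzB, ?_⟩
          intro hmem
          rw [← hvY] at hmem
          obtain ⟨u, hu, huz⟩ := Finset.mem_image.1 hmem
          have : u = z := v⁻¹.injective huz
          subst this
          rw [Finset.mem_Ioc] at hu hz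
          omega
        have e1 := eq_monoMap_of_strictMonoOn hc (hw4 i hi)
          (hmemD w (hw2 i hi) rfl) x hxX'
        have e2 := eq_monoMap_of_strictMonoOn hc (hw4' i hi)
          (hmemD w' (hw2' i hi) (heq' i hi).symm) x hxX'
        rw [e1, e2]
    have : w⁻¹ = w'⁻¹ := Equiv.ext key
    exact inv_injective this
  · -- SurjOn
    rintro Y ⟨hY1, hY2⟩
    set a : ℕ → ℕ := fun i => μ i - β i with haa
    have hYa : ∀ i < n, Y i ⊆ Finset.Ioc (M i) (M (i + 1)) ∧ (Y i).card = a i := hY1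
    have ha' : ∀ i < n, M i + a i ≤ M (i + 1) := fun i _ => ha i
    set p : Equiv.Perm ℕ :=
      ⟨F n M a Y, G n M a Y, gf hmono hYa ha', fg hmono hYa ha'⟩ with hp
    have hpinv : ⇑p⁻¹ = G n M a Y := rfl
    have hpinvinv : ⇑p⁻¹⁻¹ = F n M a Y := by rw [inv_inv]; rfl
    have hnotblk : ∀ x : ℕ, x = 0 ∨ r < x → ∀ i, i < n → ¬(M i < x ∧ x ≤ M (i + 1)) := by
      rintro x (rfl | hxr) i hi hc
      · omega
      · have : M (i + 1) ≤ r := hMn ▸ hmono hi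
        omega
    refine ⟨p⁻¹, ⟨?_, ?_, ?_, ?_⟩, ?_⟩
    · intro x hx
      show p⁻¹ x = x
      rw [hpinv]
      exact G_id (hnotblk x hx)
    · -- setwise block invariance of p⁻¹
      intro i hi
      show ⇑p⁻¹ '' _ = _
      have himg : (Finset.Ioc (M i) (M (i + 1))).image (G n M a Y)
          = Finset.Ioc (M i) (M (i + 1)) := by
        apply Finset.eq_of_subset_of_card_le
        · intro y hy
          obtain ⟨x, hx, rfl⟩ := Finset.mem_image.1 hy
          have hx' := Finset.mem_Ioc.1 hx
          rw [G_block hmono hi hx'.1 hx'.2]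
          by_cases hxY : x ∈ Y i
          · rw [if_pos hxY]
            have := monoMap_mem (cardX hi hYa).symm hxY
            rw [Finset.mem_Ioc] at this ⊢
            exact ⟨this.1, this.2.trans (ha i)⟩
          · rw [if_neg hxY]
            have := monoMap_mem (cardX' hi hYa ha').symm
              (Finset.mem_sdiff.2 ⟨hx, hxY⟩)
            rw [Finset.mem_Ioc] at this ⊢
            exact ⟨lt_of_le_of_lt (Nat.le_add_right _ _) this.1, this.2⟩
        · rw [Finset.card_image_of_injective _ (by rw [← hpinv]; exact Equiv.injective _)]
      rw [← Finset.coe_image, hpinv, himg]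
    · intro i hi
      rw [hpinvinv]
      intro x hx y hy hxy
      rw [Finset.mem_coe, Finset.mem_Ioc] at hx hy
      rw [F_block hmono hi hx.1 (hx.2.trans (ha i)), if_pos hx.2,
        F_block hmono hi hy.1 (hy.2.trans (ha i)), if_pos hy.2]
      exact monoMap_strictMonoOn (cardX hi hYa)
        (Finset.mem_coe.2 (Finset.mem_Ioc.2 hx)) (Finset.mem_coe.2 (Finset.mem_Ioc.2 hy)) hxy
    · intro i hi
      rw [hpinvinv]
      intro x hx y hy hxy
      rw [Finset.mem_coe, Finset.mem_Ioc] at hx hy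
      have hx1 : M i < x := lt_of_le_of_lt (Nat.le_add_right _ _) hx.1
      have hy1 : M i < y := lt_of_le_of_lt (Nat.le_add_right _ _) hy.1
      rw [F_block hmono hi hx1 hx.2, if_neg (not_le.2 hx.1),
        F_block hmono hi hy1 hy.2, if_neg (not_le.2 hy.1)]
      exact monoMap_strictMonoOn (cardX' hi hYa ha')
        (Finset.mem_coe.2 (Finset.mem_Ioc.2 hx)) (Finset.mem_coe.2 (Finset.mem_Ioc.2 hy)) hxy
    · -- image equals Y
      funext i
      beta_reduce
      by_cases hi : i < n
      · rw [if_pos hi]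
        have : (Finset.Ioc (M i) (M i + (μ i - β i))).image ⇑p⁻¹⁻¹
            = (Finset.Ioc (M i) (M i + a i)).image (monoMap (Finset.Ioc (M i) (M i + a i)) (Y i)) := by
          rw [hpinvinv]
          apply Finset.image_congr
          intro x hx
          rw [Finset.mem_coe, Finset.mem_Ioc] at hx
          rw [F_block hmono hi hx.1 (hx.2.trans (ha i)), if_pos hx.2]
        rw [this, monoMap_image (cardX hi hYa)]
      · rw [if_neg hi]
        exact (hY2 i (not_lt.1 hi)).symm
end

section
/- With the setup of the previous bijection, for a tuple Y = (Y₀,...,Y_{n−1}) with Y_i ⊆ R_{i+1}^μ, |Y_i| = α_i, the length of the corresponding minimal coset representative w = g⁻¹(Y) ∈ 𝔖_μ ∩ 𝒟_δ equals Σ_{i=0}^{n−1} ( Σ_{k ∈ Y_i} k − Σ_{j=1}^{α_i} (μ_{0,i} + j) ), i.e., Σ_i (Σ_{k∈Y_i} k − α_i μ_{0,i} − α_i(α_i+1)/2). -/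
open Finset

/-- Card of a product filter, fiberwise. -/
private lemma stmt14_prod_card (X X' : Finset ℕ) (P : ℕ → ℕ → Prop) [∀ a b, Decidable (P a b)] :
    ((X ×ˢ X').filter fun p : ℕ × ℕ => P p.1 p.2).card
      = ∑ a ∈ X, (X'.filter (P a)).card := by
  rw [Finset.card_eq_sum_card_fiberwise (f := Prod.fst) (t := X)
    (fun p hp => (Finset.mem_product.1 (Finset.mem_filter.1 hp).1).1)]
  refine Finset.sum_congr rfl fun a ha => ?_
  have : ((X ×ˢ X').filter (fun p : ℕ × ℕ => P p.1 p.2)).filter (fun p => p.1 = a)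
      = (X'.filter (P a)).image (Prod.mk a) := by
    ext ⟨x, y⟩
    simp only [Finset.mem_filter, Finset.mem_product, Finset.mem_image]
    constructor
    · rintro ⟨⟨⟨hx, hy⟩, hP⟩, rfl⟩
      exact ⟨y, ⟨hy, hP⟩, rfl⟩
    · rintro ⟨b, ⟨hb, hP⟩, h⟩
      obtain ⟨rfl, rfl⟩ := Prod.mk.inj h
      exact ⟨⟨⟨ha, hb⟩, hP⟩, rfl⟩
  rw [this, Finset.card_image_of_injective _ (fun b c h => (Prod.ext_iff.mp h).2)]

/-- Inversions of `w` on a `w`-invariant block equal inversions of `w⁻¹`. -/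
private lemma stmt14_inv_card (B : Finset ℕ) (w : Equiv.Perm ℕ)
    (himg : ⇑w '' ↑B = ↑B) :
    ((B ×ˢ B).filter fun p : ℕ × ℕ => p.1 < p.2 ∧ w p.2 < w p.1).card
      = ((B ×ˢ B).filter fun p : ℕ × ℕ => p.1 < p.2 ∧ w⁻¹ p.2 < w⁻¹ p.1).card := by
  have hmem : ∀ x ∈ B, w x ∈ B := by
    intro x hx
    have : w x ∈ ⇑w '' (↑B : Set ℕ) := Set.mem_image_of_mem _ hx
    rw [himg] at this
    exact this
  have hmem' : ∀ x ∈ B, w⁻¹ x ∈ B := by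
    intro x hx
    have : (x : ℕ) ∈ ⇑w '' (↑B : Set ℕ) := by rw [himg]; exact hx
    obtain ⟨y, hy, hxy⟩ := this
    have : w⁻¹ x = y := by rw [← hxy]; simp
    rw [this]; exact hy
  refine Finset.card_nbij' (fun p => (w p.2, w p.1)) (fun p => (w⁻¹ p.2, w⁻¹ p.1)) ?_ ?_ ?_ ?_
  · intro p hp; obtain ⟨x, y⟩ := p
    simp only [Finset.mem_coe, Finset.mem_filter, Finset.mem_product] at hp ⊢
    obtain ⟨⟨hx, hy⟩, hxy, hw⟩ := hp
    refine ⟨⟨hmem y hy, hmem x hx⟩, hw, ?_⟩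
    simpa using hxy
  · intro p hp; obtain ⟨x, y⟩ := p
    simp only [Finset.mem_coe, Finset.mem_filter, Finset.mem_product] at hp ⊢
    obtain ⟨⟨hx, hy⟩, hxy, hw⟩ := hp
    refine ⟨⟨hmem' y hy, hmem' x hx⟩, hw, ?_⟩
    simpa using hxy
  · rintro ⟨x, y⟩ _; simp
  · rintro ⟨x, y⟩ _; simp

/-- Per-block inversion count for a permutation increasing on the two pieces. -/
private lemma stmt14_block (m a c : ℕ) (hac : a ≤ c) (v : Equiv.Perm ℕ)
    (himg : ⇑v '' ↑(Finset.Ioc m (m + c)) = ↑(Finset.Ioc m (m + c)))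
    (h1 : StrictMonoOn ⇑v ↑(Finset.Ioc m (m + a)))
    (h2 : StrictMonoOn ⇑v ↑(Finset.Ioc (m + a) (m + c))) :
    ((((Finset.Ioc m (m + c) ×ˢ Finset.Ioc m (m + c)).filter
        (fun p : ℕ × ℕ => p.1 < p.2 ∧ v p.2 < v p.1)).card : ℤ)
      = ∑ k ∈ (Finset.Ioc m (m + a)).image ⇑v, (k : ℤ)
        - ∑ j ∈ Finset.Icc 1 a, ((m : ℤ) + (j : ℤ))) := by
  set B := Finset.Ioc m (m + c) with hB
  set X := Finset.Ioc m (m + a) with hX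
  set X' := Finset.Ioc (m + a) (m + c) with hX'
  have hmem : ∀ x ∈ B, v x ∈ B := by
    intro x hx
    have : v x ∈ ⇑v '' (↑B : Set ℕ) := Set.mem_image_of_mem _ hx
    rw [himg] at this
    exact this
  have hXB : X ⊆ B := by intro z hz; simp only [hX, hB, Finset.mem_Ioc] at *; omega
  have hX'B : X' ⊆ B := by intro z hz; simp only [hX', hB, Finset.mem_Ioc] at *; omega
  -- reduce to pairs in X × X'
  have hfe : (B ×ˢ B).filter (fun p : ℕ × ℕ => p.1 < p.2 ∧ v p.2 < v p.1)
      = (X ×ˢ X').filter (fun p : ℕ × ℕ => v p.2 < v p.1) := by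
    ext ⟨x, y⟩
    simp only [Finset.mem_filter, Finset.mem_product, hB, hX, hX', Finset.mem_Ioc]
    constructor
    · rintro ⟨⟨hx, hy⟩, hxy, hv⟩
      have hx1 : x ≤ m + a := by
        by_contra h
        have := h2 (by simp only [hX, hX', hB, Finset.mem_coe, Finset.mem_Ioc]; omega)
          (by simp only [hX, hX', hB, Finset.mem_coe, Finset.mem_Ioc]; omega) hxy
        omega
      have hy1 : m + a < y := by
        by_contra h
        have := h1 (by simp only [hX, hX', hB, Finset.mem_coe, Finset.mem_Ioc]; omega)
          (by simp only [hX, hX', hB, Finset.mem_coe, Finset.mem_Ioc]; omega) hxy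
        omega
      exact ⟨⟨⟨hx.1, hx1⟩, ⟨hy1, hy.2⟩⟩, hv⟩
    · rintro ⟨⟨hx, hy⟩, hv⟩
      exact ⟨⟨⟨hx.1, by omega⟩, ⟨by omega, hy.2⟩⟩, by omega, hv⟩
  -- key pointwise count
  have hkey : ∀ x ∈ X, (X'.filter fun b => v b < v x).card + x = v x := by
    intro x hx
    have hxm : m < x ∧ x ≤ m + a := by simpa [hX, Finset.mem_Ioc] using hx
    have hvx : v x ∈ B := hmem x (hXB hx)
    have hvxm : m < v x ∧ v x ≤ m + c := by simpa [hB, Finset.mem_Ioc] using hvx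
    set Y := X.image ⇑v with hY
    set Z := X'.image ⇑v with hZ
    have hYB : Y ⊆ B := by
      intro z hz
      obtain ⟨u, hu, rfl⟩ := Finset.mem_image.1 hz
      exact hmem u (hXB hu)
    have hBimg : B.image ⇑v = B := Finset.coe_injective (by rw [Finset.coe_image, himg])
    have hXun : X ∪ X' = B := by
      ext z; simp only [Finset.mem_union, hX, hX', hB, Finset.mem_Ioc]; omega
    have hYZun : Y ∪ Z = B := by
      rw [hY, hZ, ← Finset.image_union, hXun, hBimg]
    have hdisj : Disjoint Y Z := by
      rw [hY, hZ, Finset.disjoint_image v.injective]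
      rw [Finset.disjoint_left]
      intro z hz hz'
      simp only [hX, hX', Finset.mem_Ioc] at hz hz'
      omega
    have hZeq : Z = B \ Y := by rw [← hYZun, Finset.union_sdiff_cancel_left hdisj]
    have hc1 : (X'.filter fun b => v b < v x).card = (Z.filter (· < v x)).card := by
      rw [hZ, Finset.filter_image, Finset.card_image_of_injective _ v.injective]
    have hZf : Z.filter (· < v x) = B.filter (· < v x) \ Y.filter (· < v x) := by
      rw [hZeq]
      ext z
      simp only [Finset.mem_filter, Finset.mem_sdiff]
      tauto
    have hYfsub : Y.filter (· < v x) ⊆ B.filter (· < v x) :=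
      Finset.filter_subset_filter _ hYB
    have hcB : (B.filter (· < v x)).card = v x - 1 - m := by
      have : B.filter (· < v x) = Finset.Ioc m (v x - 1) := by
        ext z
        simp only [Finset.mem_filter, hB, Finset.mem_Ioc]
        omega
      rw [this, Nat.card_Ioc]
    have hcY : (Y.filter (· < v x)).card = x - 1 - m := by
      have heq : Y.filter (· < v x) = (X.filter (· < x)).image ⇑v := by
        rw [hY, Finset.filter_image]
        congr 1
        ext z
        simp only [Finset.mem_filter, hX, Finset.mem_Ioc]
        constructor
        · rintro ⟨hz, hvz⟩
          refine ⟨hz, ?_⟩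
          by_contra h
          have hxz : x ≤ z := by omega
          rcases eq_or_lt_of_le hxz with rfl | hlt
          · omega
          · have := h1 (by simp only [hX, hX', hB, Finset.mem_coe, Finset.mem_Ioc]; omega)
              (by simp only [hX, hX', hB, Finset.mem_coe, Finset.mem_Ioc]; omega) hlt
            omega
        · rintro ⟨hz, hzx⟩
          refine ⟨hz, h1 (by simp only [hX, hX', hB, Finset.mem_coe, Finset.mem_Ioc]; omega)
            (by simp only [hX, hX', hB, Finset.mem_coe, Finset.mem_Ioc]; omega) hzx⟩
      rw [heq, Finset.card_image_of_injective _ v.injective]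
      have : X.filter (· < x) = Finset.Ioc m (x - 1) := by
        ext z
        simp only [Finset.mem_filter, hX, Finset.mem_Ioc]
        omega
      rw [this, Nat.card_Ioc]
    have hle : (Y.filter (· < v x)).card ≤ (B.filter (· < v x)).card :=
      Finset.card_le_card hYfsub
    have hsd : (Z.filter (· < v x)).card
        = (B.filter (· < v x)).card - (Y.filter (· < v x)).card := by
      rw [hZf, Finset.card_sdiff_of_subset hYfsub]
    rw [hc1, hsd, hcB, hcY]
    rw [hcB, hcY] at hle
    omega
  -- assemble
  rw [hfe, stmt14_prod_card X X' (fun a b => v b < v a)]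
  push_cast
  rw [Finset.sum_congr rfl (fun x hx => show ((X'.filter fun b => v b < v x).card : ℤ)
      = (v x : ℤ) - (x : ℤ) by have := hkey x hx; omega)]
  rw [Finset.sum_sub_distrib]
  congr 1
  · rw [Finset.sum_image (fun x _ y _ h => v.injective h)]
  · have hXim : X = (Finset.Icc 1 a).image (fun j => m + j) := by
      ext z
      simp only [hX, Finset.mem_Ioc, Finset.mem_image, Finset.mem_Icc]
      constructor
      · intro hz; exact ⟨z - m, by omega, by omega⟩
      · rintro ⟨j, hj, rfl⟩; omega
    rw [hXim, Finset.sum_image (fun x _ y _ h => by omega)]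
    push_cast
    rfl

/-- With the setup of the bijection `g : w ↦ (w⁻¹X₀,…,w⁻¹X_{n−1})`
(`μ ∈ Λ(n,r)` with cumulative sums `M`, `β ≤ μ`, `α_i = μ_i − β_i`,
`X_i` the initial segment of size `α_i` of the block `R_{i+1}^μ`): for any
minimal coset representative `w ∈ 𝒟_δ ∩ 𝔖_μ`, the inversion-count length of
`w` equals `Σ_{i=0}^{n−1} ( Σ_{k ∈ w⁻¹X_i} k − Σ_{j=1}^{α_i} (M_i + j) )`.
Permutations are realized in `Equiv.Perm ℕ`, fixing `0` and everything
above `r`. -/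
theorem stmt14 (n r : ℕ) (hn : 1 ≤ n) (hr : 1 ≤ r)
    (μ β : ℕ → ℕ) (hβ : ∀ i < n, β i ≤ μ i)
    (hsum : ∑ i ∈ Finset.range n, μ i = r)
    (M : ℕ → ℕ) (hM : ∀ i, M i = ∑ j ∈ Finset.range i, μ j)
    (w : Equiv.Perm ℕ)
    (hwfix : ∀ x : ℕ, x = 0 ∨ r < x → w x = x)
    (hwμ : ∀ i < n, ⇑w '' ↑(Finset.Ioc (M i) (M (i + 1)))
        = ↑(Finset.Ioc (M i) (M (i + 1))))
    (hwδ1 : ∀ i < n, StrictMonoOn (⇑w⁻¹) ↑(Finset.Ioc (M i) (M i + (μ i - β i))))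
    (hwδ2 : ∀ i < n, StrictMonoOn (⇑w⁻¹) ↑(Finset.Ioc (M i + (μ i - β i)) (M (i + 1)))) :
    ((((Finset.Icc 1 r ×ˢ Finset.Icc 1 r).filter
        (fun p : ℕ × ℕ => p.1 < p.2 ∧ w p.2 < w p.1)).card : ℤ))
      = ∑ i ∈ Finset.range n,
          ((∑ k ∈ (Finset.Ioc (M i) (M i + (μ i - β i))).image ⇑w⁻¹, (k : ℤ))
            - ∑ j ∈ Finset.Icc 1 (μ i - β i), ((M i : ℤ) + (j : ℤ))) := by
  have hM0 : M 0 = 0 := by rw [hM]; simp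
  have hMn : M n = r := by rw [hM]; exact hsum
  have hMstep : ∀ i, M (i + 1) = M i + μ i := by
    intro i; rw [hM, hM, Finset.sum_range_succ]
  have hMmono : Monotone M := monotone_nat_of_le_succ (fun i => by rw [hMstep]; omega)
  set B : ℕ → Finset ℕ := fun i => Finset.Ioc (M i) (M (i + 1)) with hBdef
  have hwmem : ∀ i < n, ∀ x ∈ B i, w x ∈ B i := by
    intro i hi x hx
    have : w x ∈ ⇑w '' (↑(B i) : Set ℕ) := Set.mem_image_of_mem _ hx
    rw [hwμ i hi] at this
    exact this
  have hcover : ∀ x, 1 ≤ x → x ≤ r → ∃ i < n, M i < x ∧ x ≤ M (i + 1) := by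
    intro x hx1 hxr
    have hex : ∃ i, x ≤ M i := ⟨n, by omega⟩
    have hkn : Nat.find hex ≤ n := Nat.find_le (by omega)
    have hk := Nat.find_spec hex
    have hk0 : 0 < Nat.find hex := by
      rcases Nat.eq_zero_or_pos (Nat.find hex) with h | h
      · exfalso; rw [h] at hk; omega
      · exact h
    refine ⟨Nat.find hex - 1, by omega, ?_, ?_⟩
    · have := Nat.find_min hex (show Nat.find hex - 1 < Nat.find hex by omega)
      omega
    · have h1 : Nat.find hex - 1 + 1 = Nat.find hex := by omega
      rw [h1]; exact hk
  have hS : (Finset.Icc 1 r ×ˢ Finset.Icc 1 r).filter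
        (fun p : ℕ × ℕ => p.1 < p.2 ∧ w p.2 < w p.1)
      = (Finset.range n).biUnion
          (fun i => (B i ×ˢ B i).filter (fun p : ℕ × ℕ => p.1 < p.2 ∧ w p.2 < w p.1)) := by
    ext ⟨x, y⟩
    simp only [Finset.mem_filter, Finset.mem_product, Finset.mem_biUnion, Finset.mem_range,
      Finset.mem_Icc]
    constructor
    · rintro ⟨⟨⟨hx1, hxr⟩, hy1, hyr⟩, hxy, hw⟩
      obtain ⟨i, hi, hxi⟩ := hcover x hx1 hxr
      obtain ⟨j, hj, hyj⟩ := hcover y hy1 hyr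
      have hij : i = j := by
        rcases lt_trichotomy i j with h | h | h
        · exfalso
          have hwx : w x ∈ B i := hwmem i hi x (by simp [hBdef, Finset.mem_Ioc]; omega)
          have hwy : w y ∈ B j := hwmem j hj y (by simp [hBdef, Finset.mem_Ioc]; omega)
          simp only [hBdef, Finset.mem_Ioc] at hwx hwy
          have : M (i + 1) ≤ M j := hMmono h
          omega
        · exact h
        · exfalso
          have : M (j + 1) ≤ M i := hMmono h
          omega
      subst hij
      exact ⟨i, hi, ⟨by simp [hBdef, Finset.mem_Ioc]; omega,
        by simp [hBdef, Finset.mem_Ioc]; omega⟩, hxy, hw⟩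
    · rintro ⟨i, hi, ⟨hx, hy⟩, hxy, hw⟩
      simp only [hBdef, Finset.mem_Ioc] at hx hy
      have hub : M (i + 1) ≤ r := by rw [← hMn]; exact hMmono hi
      exact ⟨⟨⟨by omega, by omega⟩, by omega, by omega⟩, hxy, hw⟩
  have hdisj : ∀ i ∈ Finset.range n, ∀ j ∈ Finset.range n, i ≠ j →
      Disjoint ((B i ×ˢ B i).filter (fun p : ℕ × ℕ => p.1 < p.2 ∧ w p.2 < w p.1))
        ((B j ×ˢ B j).filter (fun p : ℕ × ℕ => p.1 < p.2 ∧ w p.2 < w p.1)) := by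
    intro i _ j _ hij
    rw [Finset.disjoint_left]
    rintro ⟨x, y⟩ hpi hpj
    simp only [Finset.mem_filter, Finset.mem_product, hBdef, Finset.mem_Ioc] at hpi hpj
    rcases lt_trichotomy i j with h | h | h
    · have : M (i + 1) ≤ M j := hMmono h
      omega
    · exact hij h
    · have : M (j + 1) ≤ M i := hMmono h
      omega
  rw [hS, Finset.card_biUnion hdisj]
  push_cast
  refine Finset.sum_congr rfl fun i hi => ?_
  have hi' : i < n := Finset.mem_range.1 hi
  simp only [hBdef]
  rw [hMstep i]
  have himg' : ⇑w '' ↑(Finset.Ioc (M i) (M i + μ i)) = ↑(Finset.Ioc (M i) (M i + μ i)) := by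
    rw [← hMstep i]; exact hwμ i hi'
  have hinv' : ⇑w⁻¹ '' (↑(Finset.Ioc (M i) (M i + μ i)) : Set ℕ)
      = ↑(Finset.Ioc (M i) (M i + μ i)) := by
    conv_lhs => rw [← himg']
    rw [← Set.image_comp]
    simp
  rw [stmt14_inv_card _ w himg']
  exact stmt14_block (M i) (μ i - β i) (μ i) (by have := hβ i hi'; omega) w⁻¹ hinv'
    (hwδ1 i hi') (by rw [← hMstep i]; exact hwδ2 i hi')
end
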